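/- Let A, B, C be three affinely independent points in the Euclidean plane and let β = ∠ABC be the angle at B. Then (dist A B + dist B C) / (2π − β) < (dist A B + dist B C + dist A C) / (2π). -/

import Mathlib

open Real EuclideanGeometry

/-- **Lemma 4** of Nazarov–Petrov: for any (nondegenerate) triangle `ABC` in the plane with
angle `β = ∠ABC` at `B`, one has `(AB + BC)/(2π − β) < (AB + BC + AC)/(2π)`. -/
theorem lemma4_strict (A B C : EuclideanSpace ℝ (Fin 2))
    (hABC : AffineIndependent ℝ ![A, B, C]) :
    (dist A B + dist B C) / (2 * π - ∠ A B C) <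
      (dist A B + dist B C + dist A C) / (2 * π) := by
  have hnc : ¬Collinear ℝ ({A, B, C} : Set (EuclideanSpace ℝ (Fin 2))) := by
    rw [affineIndependent_iff_not_collinear_set] at hABC
    exact hABC
  have hβpos : 0 < ∠ A B C := angle_pos_of_not_collinear hnc
  have hβlt : ∠ A B C < π := angle_lt_pi_of_not_collinear hnc
  set a := dist A B with ha
  set b := dist B C with hb
  set c := dist A C with hc
  set β := ∠ A B C with hβ
  have hAB : A ≠ B := fun h => hnc (by simp [h, collinear_pair])
  have hBC : B ≠ C := fun h => hnc (by
    rw [h]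
    simpa [Set.insert_comm] using collinear_pair ℝ A C)
  have hAC : A ≠ C := fun h => hnc (by
    rw [h]
    simpa [Set.insert_comm, Set.pair_comm] using collinear_pair ℝ C B)
  have hapos : 0 < a := dist_pos.2 hAB
  have hbpos : 0 < b := dist_pos.2 hBC
  have hcpos : 0 < c := dist_pos.2 hAC
  have hπ : 0 < π := Real.pi_pos
  -- law of cosines
  have hlaw : c * c = a * a + b * b - 2 * a * b * Real.cos β := by
    have := EuclideanGeometry.law_cos A B C
    rwa [dist_comm C B] at this
  -- sin of half angle
  have hs_sq : Real.sin (β / 2) ^ 2 = (1 - Real.cos β) / 2 := by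
    have h1 := Real.cos_two_mul (β / 2)
    have h2 : 2 * (β / 2) = β := by ring
    have h3 := Real.sin_sq_add_cos_sq (β / 2)
    rw [h2] at h1
    linarith
  have hs_nonneg : 0 ≤ Real.sin (β / 2) :=
    Real.sin_nonneg_of_nonneg_of_le_pi (by linarith) (by linarith)
  set s := Real.sin (β / 2) with hsdef
  have hcosβ : -1 ≤ Real.cos β := Real.neg_one_le_cos β
  -- key: c ≥ (a+b) * s
  have hkey : (a + b) * s ≤ c := by
    have hsq : ((a + b) * s) ^ 2 ≤ c ^ 2 := by
      have : ((a + b) * s) ^ 2 = (a + b) ^ 2 * ((1 - Real.cos β) / 2) := by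
        rw [mul_pow, hs_sq]
      rw [this]
      nlinarith [sq_nonneg (a - b), hlaw, hcosβ]
    have h1 : 0 ≤ (a + b) * s := mul_nonneg (by linarith) hs_nonneg
    nlinarith [hsq, hcpos]
  -- Jordan's inequality: β ≤ π * s
  have hjordan : β ≤ π * s := by
    have := Real.mul_le_sin (x := β / 2) (by linarith) (by linarith)
    rw [← hsdef] at this
    have h2 : 2 / π * (β / 2) = β / π := by field_simp
    rw [h2] at this
    have h4 : β ≤ s * π := (div_le_iff₀ hπ).1 this
    linarith [h4]
  -- main inequality: β * (a + b + c) < 2 * π * c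
  have hmain : β * (a + b + c) < 2 * π * c := by
    have h1 : β * (a + b) ≤ π * (s * (a + b)) := by nlinarith
    have h2 : π * (s * (a + b)) ≤ π * c := by nlinarith
    have h3 : β * c < π * c := by nlinarith
    nlinarith
  rw [div_lt_div_iff₀ (by linarith) (by linarith)]
  nlinarith
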